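/- Let R̃ = ⟨c̃, G̃, Ã, b̃⟩ be a constrained zonotope in ℝ^{n_x} with G̃ ∈ ℝ^{n_x×ξ̃}, Ã ∈ ℝ^{ñ_c×ξ̃}, b̃ ∈ ℝ^{ñ_c}. Let H ∈ ℝ^{n_y×n_x}, y ∈ ℝ^{n_y}, and let Z_v = ⟨c_v, G_v⟩ be a zonotope in ℝ^{n_y} with G_v ∈ ℝ^{n_y×ξ_v}. Then the set {x ∈ R̃ : ∃ v ∈ Z_v, y = Hx + v} is equal to the constrained zonotope ⟨ĉ, Ĝ, Â, b̂⟩ where ĉ = c̃, Ĝ = [G̃, 0_{n_x×ξ_v}], Â = [ Ã , 0_{ñ_c×ξ_v} ; H G̃ , G_v ] (block matrix), and b̂ = [ b̃ ; y − H c̃ − c_v ]. -/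

import Mathlib

open Matrix

/-- The measurement-update intersection of a constrained zonotope
`R̃ = ⟨c̃, G̃, Ã, b̃⟩` with the set of states consistent with measurement
`y = Hx + v`, `v ∈ ⟨c_v, G_v⟩`, equals the constrained zonotope
`⟨c̃, [G̃ 0], [Ã 0; HG̃ G_v], [b̃; y − Hc̃ − c_v]⟩`. -/
theorem stmt_3 {nx ny ξt ξv nc : ℕ}
    (ct : Fin nx → ℝ) (Gt : Matrix (Fin nx) (Fin ξt) ℝ)
    (At : Matrix (Fin nc) (Fin ξt) ℝ) (bt : Fin nc → ℝ)
    (H : Matrix (Fin ny) (Fin nx) ℝ) (y : Fin ny → ℝ)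
    (cv : Fin ny → ℝ) (Gv : Matrix (Fin ny) (Fin ξv) ℝ) :
    {x : Fin nx → ℝ |
        (∃ β : Fin ξt → ℝ, (∀ i, |β i| ≤ 1) ∧ At.mulVec β = bt ∧ x = ct + Gt.mulVec β) ∧
        ∃ v : Fin ny → ℝ,
          (∃ βv : Fin ξv → ℝ, (∀ i, |βv i| ≤ 1) ∧ v = cv + Gv.mulVec βv) ∧
          y = H.mulVec x + v} =
    {x : Fin nx → ℝ |
        ∃ β : Fin ξt ⊕ Fin ξv → ℝ, (∀ i, |β i| ≤ 1) ∧
          (Matrix.fromBlocks At 0 (H * Gt) Gv).mulVec β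
            = Sum.elim bt (y - H.mulVec ct - cv) ∧
          x = ct + (Matrix.fromCols Gt (0 : Matrix (Fin nx) (Fin ξv) ℝ)).mulVec β} := by
  ext x
  simp only [Set.mem_setOf_eq]
  constructor
  · rintro ⟨⟨β, hβ, hA, rfl⟩, v, ⟨βv, hβv, rfl⟩, hy⟩
    refine ⟨Sum.elim β βv, ?_, ?_, ?_⟩
    · rintro (i | i)
      · exact hβ i
      · exact hβv i
    · rw [fromBlocks_mulVec]
      ext (i | i)
      · simpa using congrFun hA i
      · have := congrFun hy i
        simp only [Sum.elim_inr, Sum.elim_comp_inl, Sum.elim_comp_inr,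
          mulVec_add, Pi.add_apply, Pi.sub_apply, ← mulVec_mulVec] at *
        linarith
    · rw [fromCols_mulVec_sumElim]
      simp
  · rintro ⟨β, hβ, hAb, rfl⟩
    rw [fromBlocks_mulVec] at hAb
    have h1 := congrFun hAb
    refine ⟨⟨β ∘ Sum.inl, fun i => hβ _, ?_, ?_⟩, cv + Gv.mulVec (β ∘ Sum.inr),
      ⟨β ∘ Sum.inr, fun i => hβ _, rfl⟩, ?_⟩
    · ext i
      simpa using h1 (Sum.inl i)
    · have : Sum.elim (β ∘ Sum.inl) (β ∘ Sum.inr) = β := by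
        ext (i | i) <;> rfl
      rw [← this, fromCols_mulVec_sumElim]
      simp
    · have heq : Sum.elim (β ∘ Sum.inl) (β ∘ Sum.inr) = β := by
        ext (i | i) <;> rfl
      rw [← heq, fromCols_mulVec_sumElim]
      ext i
      have := h1 (Sum.inr i)
      simp only [heq, Sum.elim_inr, Sum.elim_comp_inl, Sum.elim_comp_inr, Pi.add_apply,
        Pi.sub_apply, Pi.zero_apply, mulVec_add, Matrix.zero_mulVec, Matrix.mulVec_zero,
        ← mulVec_mulVec] at *
      linarith
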